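/- The polynomials q_n(x) = (4x²-2) H_{n-1}'(x) - 8x H_{n-1}(x) satisfy, for all n ≥ 1 (with q_{-2} = q_{-1} = 0), the recursion (2/3)(n-1)(n-2)(n-3) q_{n-3}(x) + (n-3)(n-1) q_{n-1}(x) + ((n-3)/2) q_{n+1}(x) + ((n-3)/(12n)) q_{n+3}(x) = ((2x³/3) - x) q_n(x). -/

import Mathlib

open Polynomial

/-- The physicists' Hermite polynomials, via `H_{n+1} = 2x H_n - H_n'`. -/
noncomputable def physHermite : ℕ → Polynomial ℝ
  | 0 => 1
  | n + 1 => C 2 * X * physHermite n - derivative (physHermite n)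

/-- `q_k = (4x²-2) H_{k-1}' - 8x H_{k-1}` for `k ≥ 1`, with `q_0 = 0` and `q_k = 0`
for negative indices. -/
noncomputable def qGap (k : ℤ) : Polynomial ℝ :=
  if 1 ≤ k then
    (C 4 * X ^ 2 - C 2) * derivative (physHermite (k - 1).toNat)
      - C 8 * X * physHermite (k - 1).toNat
  else 0

lemma physHermite_succ' (m : ℕ) :
    physHermite (m+1) = C 2 * X * physHermite m - derivative (physHermite m) := rfl

lemma physHermite_deriv (m : ℕ) :
    derivative (physHermite (m+1)) = (2*(m : Polynomial ℝ)+2) * physHermite m := by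
  induction m with
  | zero => simp [physHermite, map_ofNat]
  | succ m ih =>
    rw [physHermite_succ' (m+1), derivative_sub, ih, derivative_mul, derivative_mul, derivative_C,
      derivative_X, ih, derivative_mul, physHermite_succ' m]
    push_cast
    have : derivative ((2*(m : Polynomial ℝ)+2)) = 0 := by simp
    rw [this]
    ring_nf
    simp only [map_ofNat]
    ring

lemma physHermite_Xmul (m : ℕ) :
    2 * X * physHermite (m+1)
      = physHermite (m+2) + (2*(m : Polynomial ℝ)+2) * physHermite m := by
  rw [physHermite_succ' (m+1), physHermite_deriv m]
  simp only [map_ofNat]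
  ring

lemma physHermite_X3mul (m : ℕ) : 8 * X^3 * physHermite (m+3)
    = physHermite (m+6) + (6*(m : Polynomial ℝ)+24) * physHermite (m+4)
      + 12*((m : Polynomial ℝ)+3)^2 * physHermite (m+2)
      + 8*((m : Polynomial ℝ)+1)*((m : Polynomial ℝ)+2)*((m : Polynomial ℝ)+3) * physHermite m := by
  have e0 := physHermite_Xmul m
  have e1 := physHermite_Xmul (m+1)
  have e2 := physHermite_Xmul (m+2)
  have e3 := physHermite_Xmul (m+3)
  have e4 := physHermite_Xmul (m+4)
  simp only [Nat.add_assoc, Nat.reduceAdd] at e0 e1 e2 e3 e4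
  push_cast at e0 e1 e2 e3 e4
  linear_combination (norm := (push_cast; ring1))
    4*X^2*e2 + 2*X*e3 + (2*(m : Polynomial ℝ)+6)*2*X*e1 + e4
      + (4*(m : Polynomial ℝ)+14)*e2 + (2*(m : Polynomial ℝ)+6)*(2*(m : Polynomial ℝ)+4)*e0

lemma qGap_expand (i : ℕ) : qGap ((i:ℤ)+4)
    = (2*(i : Polynomial ℝ)+2) * physHermite (i+4)
      + 8*((i : Polynomial ℝ)+3)*((i : Polynomial ℝ)+1) * physHermite (i+2)
      + 8*((i : Polynomial ℝ)+1)*((i : Polynomial ℝ)+2)*((i : Polynomial ℝ)+3) * physHermite i := by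
  rw [qGap, if_pos (by omega : (1:ℤ) ≤ (i:ℤ)+4), show ((i:ℤ)+4-1).toNat = i+3 by omega,
    show i+3 = (i+2)+1 by omega, physHermite_deriv (i+2)]
  have e0 := physHermite_Xmul i
  have e1 := physHermite_Xmul (i+1)
  have e2 := physHermite_Xmul (i+2)
  simp only [Nat.add_assoc, Nat.reduceAdd] at e0 e1 e2
  push_cast at e0 e1 e2
  simp only [map_ofNat]
  linear_combination (norm := (push_cast; ring1))
    (2*(i : Polynomial ℝ)+6)*(2*X*e1 + e2 + (2*(i : Polynomial ℝ)+4)*e0) - 4*e2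

lemma main_scaled (i : ℕ) :
    (24*((i:Polynomial ℝ)+7)*((i:Polynomial ℝ)+6)*((i:Polynomial ℝ)+5)*((i:Polynomial ℝ)+4))
        * qGap ((i:ℤ)+4)
      + (36*((i:Polynomial ℝ)+7)*((i:Polynomial ℝ)+4)*((i:Polynomial ℝ)+6)) * qGap ((i:ℤ)+6)
      + (18*((i:Polynomial ℝ)+7)*((i:Polynomial ℝ)+4)) * qGap ((i:ℤ)+8)
      + (3*((i:Polynomial ℝ)+4)) * qGap ((i:ℤ)+10)
    = (24*((i:Polynomial ℝ)+7) * X^3 - 36*((i:Polynomial ℝ)+7) * X) * qGap ((i:ℤ)+7) := by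
  have Q0 := qGap_expand i
  have Q2 := qGap_expand (i+2)
  have Q3 := qGap_expand (i+3)
  have Q4 := qGap_expand (i+4)
  have Q6 := qGap_expand (i+6)
  have A0 := physHermite_X3mul i
  have A2 := physHermite_X3mul (i+2)
  have A4 := physHermite_X3mul (i+4)
  have B2 := physHermite_Xmul (i+2)
  have B4 := physHermite_Xmul (i+4)
  have B6 := physHermite_Xmul (i+6)
  simp only [Nat.add_assoc, Nat.reduceAdd] at Q0 Q2 Q3 Q4 Q6 A0 A2 A4 B2 B4 B6
  push_cast at Q0 Q2 Q3 Q4 Q6 A0 A2 A4 B2 B4 B6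
  rw [show (i:ℤ)+2+4 = (i:ℤ)+6 by ring] at Q2
  rw [show (i:ℤ)+3+4 = (i:ℤ)+7 by ring] at Q3
  rw [show (i:ℤ)+4+4 = (i:ℤ)+8 by ring] at Q4
  rw [show (i:ℤ)+6+4 = (i:ℤ)+10 by ring] at Q6
  linear_combination (norm := (push_cast; ring1))
    24*((i:Polynomial ℝ)+7)*((i:Polynomial ℝ)+6)*((i:Polynomial ℝ)+5)*((i:Polynomial ℝ)+4)*Q0
    + 36*((i:Polynomial ℝ)+7)*((i:Polynomial ℝ)+4)*((i:Polynomial ℝ)+6)*Q2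
    + 18*((i:Polynomial ℝ)+7)*((i:Polynomial ℝ)+4)*Q4
    + 3*((i:Polynomial ℝ)+4)*Q6
    - (24*((i:Polynomial ℝ)+7)*X^3 - 36*((i:Polynomial ℝ)+7)*X)*Q3
    - 3*((i:Polynomial ℝ)+7)*(2*(i:Polynomial ℝ)+8)*A4
    - 24*((i:Polynomial ℝ)+7)*((i:Polynomial ℝ)+6)*((i:Polynomial ℝ)+4)*A2
    - 24*((i:Polynomial ℝ)+7)*((i:Polynomial ℝ)+4)*((i:Polynomial ℝ)+5)*((i:Polynomial ℝ)+6)*A0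
    + 18*((i:Polynomial ℝ)+7)*(2*(i:Polynomial ℝ)+8)*B6
    + 144*((i:Polynomial ℝ)+7)*((i:Polynomial ℝ)+6)*((i:Polynomial ℝ)+4)*B4
    + 144*((i:Polynomial ℝ)+7)*((i:Polynomial ℝ)+4)*((i:Polynomial ℝ)+5)*((i:Polynomial ℝ)+6)*B2

lemma int_toNat_ofNat_lit (n : ℕ) :
    (no_index (OfNat.ofNat n : ℤ)).toNat = OfNat.ofNat n := rfl

set_option maxHeartbeats 1000000 in
/-- The recursion
`(2/3)(n-1)(n-2)(n-3) q_{n-3} + (n-3)(n-1) q_{n-1} + ((n-3)/2) q_{n+1} + ((n-3)/(12n)) q_{n+3}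
 = ((2x³/3) - x) q_n` for all `n ≥ 1`. -/
theorem two_gap_recursion (n : ℕ) (hn : 1 ≤ n) :
    C ((2 / 3 : ℝ) * ((n : ℝ) - 1) * ((n : ℝ) - 2) * ((n : ℝ) - 3)) * qGap ((n : ℤ) - 3)
      + C (((n : ℝ) - 3) * ((n : ℝ) - 1)) * qGap ((n : ℤ) - 1)
      + C (((n : ℝ) - 3) / 2) * qGap ((n : ℤ) + 1)
      + C (((n : ℝ) - 3) / (12 * (n : ℝ))) * qGap ((n : ℤ) + 3) =
    (C (2 / 3 : ℝ) * X ^ 3 - X) * qGap (n : ℤ) := by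
  rcases Nat.lt_or_ge n 7 with h | h
  · have h720 : (C (720:ℝ) : Polynomial ℝ) ≠ 0 := by simp [Polynomial.C_ne_zero]
    interval_cases n <;>
    · apply mul_left_cancel₀ h720
      simp only [mul_add, mul_sub, ← mul_assoc, ← C_mul]
      norm_num [qGap, physHermite, Int.toNat_natCast, int_toNat_ofNat_lit, map_ofNat]
      try first
      | ring1
      | (right; ring1)
  · obtain ⟨i, rfl⟩ : ∃ i, n = i + 7 := ⟨n - 7, by omega⟩
    push_cast
    rw [show (i:ℤ)+7-3 = (i:ℤ)+4 by ring, show (i:ℤ)+7-1 = (i:ℤ)+6 by ring,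
      show (i:ℤ)+7+1 = (i:ℤ)+8 by ring, show (i:ℤ)+7+3 = (i:ℤ)+10 by ring]
    have hne : ((i:ℝ)+7) ≠ 0 := by positivity
    have hc : (C ((36:ℝ)*((i:ℝ)+7)) : Polynomial ℝ) ≠ 0 := by
      simp only [ne_eq, Polynomial.C_eq_zero]
      positivity
    apply mul_left_cancel₀ hc
    have K1 : (C ((36:ℝ)*((i:ℝ)+7)) : Polynomial ℝ)
          * C ((2/3 : ℝ)*((i:ℝ)+7-1)*((i:ℝ)+7-2)*((i:ℝ)+7-3))
        = 24*((i:Polynomial ℝ)+7)*((i:Polynomial ℝ)+6)*((i:Polynomial ℝ)+5)*((i:Polynomial ℝ)+4) := by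
      rw [← C_mul, show (36:ℝ)*((i:ℝ)+7)*((2/3 : ℝ)*((i:ℝ)+7-1)*((i:ℝ)+7-2)*((i:ℝ)+7-3))
        = 24*((i:ℝ)+7)*((i:ℝ)+6)*((i:ℝ)+5)*((i:ℝ)+4) by ring]
      simp only [map_mul, map_add, map_ofNat, map_natCast]
    have K2 : (C ((36:ℝ)*((i:ℝ)+7)) : Polynomial ℝ) * C ((((i:ℝ)+7) - 3) * (((i:ℝ)+7) - 1))
        = 36*((i:Polynomial ℝ)+7)*((i:Polynomial ℝ)+4)*((i:Polynomial ℝ)+6) := by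
      rw [← C_mul, show (36:ℝ)*((i:ℝ)+7)*((((i:ℝ)+7) - 3) * (((i:ℝ)+7) - 1))
        = 36*((i:ℝ)+7)*((i:ℝ)+4)*((i:ℝ)+6) by ring]
      simp only [map_mul, map_add, map_ofNat, map_natCast]
    have K3 : (C ((36:ℝ)*((i:ℝ)+7)) : Polynomial ℝ) * C ((((i:ℝ)+7) - 3) / 2)
        = 18*((i:Polynomial ℝ)+7)*((i:Polynomial ℝ)+4) := by
      rw [← C_mul, show (36:ℝ)*((i:ℝ)+7)*((((i:ℝ)+7) - 3) / 2)
        = 18*((i:ℝ)+7)*((i:ℝ)+4) by ring]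
      simp only [map_mul, map_add, map_ofNat, map_natCast]
    have K4 : (C ((36:ℝ)*((i:ℝ)+7)) : Polynomial ℝ) * C ((((i:ℝ)+7) - 3) / (12 * ((i:ℝ)+7)))
        = 3*((i:Polynomial ℝ)+4) := by
      rw [← C_mul, show (36:ℝ)*((i:ℝ)+7)*((((i:ℝ)+7) - 3) / (12 * ((i:ℝ)+7)))
        = 3*((i:ℝ)+4) by field_simp; ring]
      simp only [map_mul, map_add, map_ofNat, map_natCast]
    have KR : (C ((36:ℝ)*((i:ℝ)+7)) : Polynomial ℝ) * C ((2:ℝ)/3)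
        = 24*((i:Polynomial ℝ)+7) := by
      rw [← C_mul, show (36:ℝ)*((i:ℝ)+7)*((2:ℝ)/3) = 24*((i:ℝ)+7) by ring]
      simp only [map_mul, map_add, map_ofNat, map_natCast]
    have CX : (C ((36:ℝ)*((i:ℝ)+7)) : Polynomial ℝ) = 36*((i:Polynomial ℝ)+7) := by
      simp only [map_mul, map_add, map_ofNat, map_natCast]
    linear_combination (norm := ring1)
      main_scaled i + qGap ((i:ℤ)+4) * K1 + qGap ((i:ℤ)+6) * K2 + qGap ((i:ℤ)+8) * K3
        + qGap ((i:ℤ)+10) * K4 - X^3 * qGap ((i:ℤ)+7) * KR + X * qGap ((i:ℤ)+7) * CX
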